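/- Let u ∈ ℝ⁸ be a unit vector (identified with a real 3-qubit state). There exist angles θ₀, θ₁, θ₂ such that (R_y(θ₂) ⊗ R_y(θ₁) ⊗ R_y(θ₀)) u has coordinates indexed by the binary strings 001, 010, and 100 all equal to zero; that is, every real 3-qubit state is equivalent under local orthogonal rotations to one of the form λ₁|000⟩ + λ₂|011⟩ + λ₃|101⟩ + λ₄|110⟩ + λ₅|111⟩. -/

import Mathlib

open Real Matrix Kronecker

noncomputable def Ry (θ : ℝ) : Matrix (Fin 2) (Fin 2) ℝ :=
  !![Real.cos (θ/2), -Real.sin (θ/2); Real.sin (θ/2), Real.cos (θ/2)]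

lemma mv_eq (A B C : Matrix (Fin 2) (Fin 2) ℝ) (u : Fin 2 × Fin 2 × Fin 2 → ℝ)
    (a b c : Fin 2) :
    ((A ⊗ₖ (B ⊗ₖ C)).mulVec u) (a, b, c) =
      ∑ y : Fin 2 × Fin 2 × Fin 2, A a y.1 * (B b y.2.1 * (C c y.2.2 * u y)) := by
  simp only [Matrix.mulVec, dotProduct, Matrix.kroneckerMap_apply]
  apply Finset.sum_congr rfl
  intro y _
  ring

lemma ry_deriv (j : Fin 2) (θ : ℝ) :
    HasDerivAt (fun t => Ry t 0 j) (-(1/2) * Ry θ 1 j) θ := by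
  have hd : HasDerivAt (fun t : ℝ => t / 2) (1/2) θ := by
    simpa using (hasDerivAt_id θ).div_const 2
  fin_cases j
  · have := (Real.hasDerivAt_cos (θ/2)).comp θ hd
    simp only [Ry, Matrix.cons_val', Matrix.cons_val_zero, Matrix.cons_val_one,
      Matrix.head_cons, Matrix.empty_val', Matrix.cons_val_fin_one, Matrix.head_fin_const,
      Matrix.of_apply]
    exact this.congr_deriv (by change _ = -(1/2) * Real.sin (θ/2); ring)
  · have := ((Real.hasDerivAt_sin (θ/2)).comp θ hd).neg
    simp only [Ry, Matrix.cons_val', Matrix.cons_val_zero, Matrix.cons_val_one,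
      Matrix.head_cons, Matrix.empty_val', Matrix.cons_val_fin_one, Matrix.head_fin_const,
      Matrix.of_apply]
    exact this.congr_deriv (by change _ = -(1/2) * Real.cos (θ/2); ring)

lemma d2 (B C : Matrix (Fin 2) (Fin 2) ℝ) (u : Fin 2 × Fin 2 × Fin 2 → ℝ)
    (b c : Fin 2) (θ : ℝ) :
    HasDerivAt (fun t => ((Ry t ⊗ₖ (B ⊗ₖ C)).mulVec u) (0, b, c))
      (-(1/2) * ((Ry θ ⊗ₖ (B ⊗ₖ C)).mulVec u) (1, b, c)) θ := by
  simp only [mv_eq, Finset.mul_sum]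
  apply HasDerivAt.fun_sum
  intro y _
  have := (ry_deriv y.1 θ).mul_const (B b y.2.1 * (C c y.2.2 * u y))
  exact this.congr_deriv (by ring)

lemma d1 (A C : Matrix (Fin 2) (Fin 2) ℝ) (u : Fin 2 × Fin 2 × Fin 2 → ℝ)
    (a c : Fin 2) (θ : ℝ) :
    HasDerivAt (fun t => ((A ⊗ₖ (Ry t ⊗ₖ C)).mulVec u) (a, 0, c))
      (-(1/2) * ((A ⊗ₖ (Ry θ ⊗ₖ C)).mulVec u) (a, 1, c)) θ := by
  simp only [mv_eq, Finset.mul_sum]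
  apply HasDerivAt.fun_sum
  intro y _
  have := ((ry_deriv y.2.1 θ).mul_const (C c y.2.2 * u y)).const_mul (A a y.1)
  exact this.congr_deriv (by ring)

lemma d0 (A B : Matrix (Fin 2) (Fin 2) ℝ) (u : Fin 2 × Fin 2 × Fin 2 → ℝ)
    (a b : Fin 2) (θ : ℝ) :
    HasDerivAt (fun t => ((A ⊗ₖ (B ⊗ₖ Ry t)).mulVec u) (a, b, 0))
      (-(1/2) * ((A ⊗ₖ (B ⊗ₖ Ry θ)).mulVec u) (a, b, 1)) θ := by
  simp only [mv_eq, Finset.mul_sum]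
  apply HasDerivAt.fun_sum
  intro y _
  have := (((ry_deriv y.2.2 θ).mul_const (u y)).const_mul (B b y.2.1)).const_mul (A a y.1)
  exact this.congr_deriv (by ring)

lemma ry_periodic : Function.Periodic Ry (4 * π) := by
  intro θ
  ext i j
  have h2 : (θ + 4 * π) / 2 = θ / 2 + 2 * π := by ring
  fin_cases i <;> fin_cases j <;>
    simp [Ry, h2, Real.cos_add_two_pi, Real.sin_add_two_pi]

theorem stmt14 (u : Fin 2 × Fin 2 × Fin 2 → ℝ) (hu : ∑ k, u k ^ 2 = 1) :
    ∃ θ₀ θ₁ θ₂ : ℝ,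
      ((Ry θ₂ ⊗ₖ (Ry θ₁ ⊗ₖ Ry θ₀)).mulVec u) (0, 0, 1) = 0 ∧
      ((Ry θ₂ ⊗ₖ (Ry θ₁ ⊗ₖ Ry θ₀)).mulVec u) (0, 1, 0) = 0 ∧
      ((Ry θ₂ ⊗ₖ (Ry θ₁ ⊗ₖ Ry θ₀)).mulVec u) (1, 0, 0) = 0 := by
  set F : ℝ × ℝ × ℝ → ℝ :=
    fun p => ((Ry p.1 ⊗ₖ (Ry p.2.1 ⊗ₖ Ry p.2.2)).mulVec u) (0, 0, 0) with hF
  have hFc : Continuous F := by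
    have : F = fun p : ℝ × ℝ × ℝ =>
        ∑ y : Fin 2 × Fin 2 × Fin 2,
          Ry p.1 0 y.1 * (Ry p.2.1 0 y.2.1 * (Ry p.2.2 0 y.2.2 * u y)) := by
      funext p
      exact mv_eq _ _ _ u 0 0 0
    rw [this]
    apply continuous_finset_sum
    intro y _
    fin_cases y <;> simp [Ry] <;> fun_prop
  have h4π : (0:ℝ) < 4 * π := by positivity
  set K : Set (ℝ × ℝ × ℝ) :=
    Set.Icc 0 (4*π) ×ˢ (Set.Icc 0 (4*π) ×ˢ Set.Icc 0 (4*π)) with hK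
  have hKc : IsCompact K := isCompact_Icc.prod (isCompact_Icc.prod isCompact_Icc)
  have hKne : K.Nonempty :=
    ⟨(0, 0, 0), ⟨⟨le_refl _, h4π.le⟩, ⟨le_refl _, h4π.le⟩, ⟨le_refl _, h4π.le⟩⟩⟩
  obtain ⟨m, _, hmax⟩ := hKc.exists_isMaxOn hKne hFc.continuousOn
  have hglob : ∀ p : ℝ × ℝ × ℝ, F p ≤ F m := by
    rintro ⟨a, b, c⟩
    obtain ⟨a', ha', haeq⟩ := ry_periodic.exists_mem_Ico₀ h4π a
    obtain ⟨b', hb', hbeq⟩ := ry_periodic.exists_mem_Ico₀ h4π b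
    obtain ⟨c', hc', hceq⟩ := ry_periodic.exists_mem_Ico₀ h4π c
    have : F (a, b, c) = F (a', b', c') := by
      simp only [hF, haeq, hbeq, hceq]
    rw [this]
    exact hmax ⟨Set.Ico_subset_Icc_self ha', Set.Ico_subset_Icc_self hb',
      Set.Ico_subset_Icc_self hc'⟩
  refine ⟨m.2.2, m.2.1, m.1, ?_, ?_, ?_⟩
  · -- derivative in θ₀ direction
    have hdz : IsLocalMax (fun t => F (m.1, m.2.1, t)) m.2.2 :=
      Filter.Eventually.of_forall fun t => hglob (m.1, m.2.1, t)
    have h := d0 (Ry m.1) (Ry m.2.1) u 0 0 m.2.2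
    have := hdz.hasDerivAt_eq_zero h
    have h2 : ((Ry m.1 ⊗ₖ (Ry m.2.1 ⊗ₖ Ry m.2.2)).mulVec u) (0, 0, 1) = 0 := by
      linarith
    exact h2
  · have hdz : IsLocalMax (fun t => F (m.1, t, m.2.2)) m.2.1 :=
      Filter.Eventually.of_forall fun t => hglob (m.1, t, m.2.2)
    have h := d1 (Ry m.1) (Ry m.2.2) u 0 0 m.2.1
    have := hdz.hasDerivAt_eq_zero h
    have h2 : ((Ry m.1 ⊗ₖ (Ry m.2.1 ⊗ₖ Ry m.2.2)).mulVec u) (0, 1, 0) = 0 := by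
      linarith
    exact h2
  · have hdz : IsLocalMax (fun t => F (t, m.2.1, m.2.2)) m.1 :=
      Filter.Eventually.of_forall fun t => hglob (t, m.2.1, m.2.2)
    have h := d2 (Ry m.2.1) (Ry m.2.2) u 0 0 m.1
    have := hdz.hasDerivAt_eq_zero h
    have h2 : ((Ry m.1 ⊗ₖ (Ry m.2.1 ⊗ₖ Ry m.2.2)).mulVec u) (1, 0, 0) = 0 := by
      linarith
    exact h2
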